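/- (Continuous-time invariance for higher relative degree.) Let x be a closed-loop trajectory of the sampled-data control-affine system, where h has relative degree r. Suppose s_k(x(0)) ≥ 0 for every k = 0, …, r−1, and that for every k ∈ ℕ and every t ∈ (t_k, t_{k+1}) one has ξ(x(t), u_k) ≥ 0, i.e. L_f^r h(x(t)) + L_g L_f^{r−1} h(x(t)) u_k + aᵀη(x(t)) ≥ 0. Then h(x(t)) ≥ 0 for all t ≥ 0. -/

import Mathlib

open Set Filter

noncomputable section

/-- `ℝⁿ` as a Euclidean space. -/
abbrev E (n : ℕ) : Type := EuclideanSpace ℝ (Fin n)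

/-- Iterated Lie derivative along `f`: `L_f^0 h = h`, `L_f^{k+1} h (x) = ∇(L_f^k h)(x)·f(x)`. -/
noncomputable def lieIter {n : ℕ} (f : E n → E n) (h : E n → ℝ) : ℕ → E n → ℝ
  | 0 => h
  | k + 1 => fun p => fderiv ℝ (lieIter f h k) p (f p)

/-- The cascaded functions `s_0 = h`, `s_k = L_f s_{k-1} + λ_k s_{k-1}` (using `lam k` as
`λ_k`). -/
noncomputable def cascade {n : ℕ} (f : E n → E n) (h : E n → ℝ) (lam : ℕ → ℝ) :
    ℕ → E n → ℝ
  | 0 => h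
  | k + 1 => fun p =>
      fderiv ℝ (cascade f h lam k) p (f p) + lam (k + 1) * cascade f h lam k p

/-- `esym lam k j` is the `j`-th elementary symmetric polynomial `e_j(λ_1, …, λ_k)`
(so `esym lam k 0 = 1`). -/
noncomputable def esym (lam : ℕ → ℝ) (k j : ℕ) : ℝ :=
  ∑ S ∈ (Finset.Icc 1 k).powersetCard j, ∏ i ∈ S, lam i

/-- The higher-order CBF expression
`ξ(x,u) = L_f^r h(x) + L_g L_f^{r-1} h(x) u + aᵀη(x)`, where `a_i = e_i(λ_1, …, λ_r)` and
`aᵀη(x) = Σ_{i=0}^{r-1} e_{r-i}(λ_1, …, λ_r) · L_f^i h(x)`. -/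
noncomputable def xiR {n m : ℕ} (f : E n → E n) (g : E n → E m →L[ℝ] E n)
    (h : E n → ℝ) (lam : ℕ → ℝ) (r : ℕ) (p : E n) (v : E m) : ℝ :=
  lieIter f h r p + fderiv ℝ (lieIter f h (r - 1)) p (g p v)
    + ∑ i ∈ Finset.range r, esym lam r (r - i) * lieIter f h i p

/-! ### Auxiliary lemmas -/

lemma esym_zero' (lam : ℕ → ℝ) (k : ℕ) : esym lam k 0 = 1 := by
  simp [esym]

lemma esym_of_lt' (lam : ℕ → ℝ) {k j : ℕ} (h : k < j) : esym lam k j = 0 := by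
  unfold esym
  rw [Finset.powersetCard_eq_empty.2 (by simpa using h)]
  simp

lemma esym_succ' (lam : ℕ → ℝ) (k j : ℕ) :
    esym lam (k+1) (j+1) = esym lam k (j+1) + lam (k+1) * esym lam k j := by
  classical
  unfold esym
  have hnot : (k+1) ∉ Finset.Icc 1 k := by simp
  have hins : Finset.Icc 1 (k+1) = insert (k+1) (Finset.Icc 1 k) := by
    ext i; simp only [Finset.mem_Icc, Finset.mem_insert]; omega
  rw [hins, Finset.powersetCard_succ_insert hnot, Finset.sum_union, Finset.sum_image]
  · congr 1
    rw [Finset.mul_sum]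
    refine Finset.sum_congr rfl fun S hS => ?_
    have hSk : (k+1) ∉ S := fun hmem => hnot ((Finset.mem_powersetCard.1 hS).1 hmem)
    rw [Finset.prod_insert hSk]
  · intro S hS T hT hST
    have hSk : (k+1) ∉ S := fun hmem => hnot ((Finset.mem_powersetCard.1 hS).1 hmem)
    have hTk : (k+1) ∉ T := fun hmem => hnot ((Finset.mem_powersetCard.1 hT).1 hmem)
    have := congrArg (Finset.erase · (k+1)) hST
    simpa [Finset.erase_insert, hSk, hTk, Finset.erase_eq_of_notMem] using this
  · rw [Finset.disjoint_left]
    intro S hS hS'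
    obtain ⟨T, hT, rfl⟩ := Finset.mem_image.1 hS'
    exact hnot ((Finset.mem_powersetCard.1 hS).1 (Finset.mem_insert_self _ _))

/-- Grönwall-type nonnegativity lemma for piecewise-differentiable functions. -/
lemma ode_nonneg' (t : ℕ → ℝ) (ht0 : t 0 = 0) (htmono : StrictMono t)
    (httop : Tendsto t atTop atTop) (lam : ℝ) (y : ℝ → ℝ)
    (hyc : ContinuousOn y (Ici 0)) (hy0 : 0 ≤ y 0)
    (hder : ∀ k : ℕ, ∀ s ∈ Ioo (t k) (t (k+1)),
      ∃ d, HasDerivAt y d s ∧ -(lam * y s) ≤ d) :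
    ∀ s, 0 ≤ s → 0 ≤ y s := by
  classical
  set z : ℝ → ℝ := fun s => Real.exp (lam * s) * y s with hz
  have hzc : ContinuousOn z (Ici 0) :=
    ((Real.continuous_exp.comp (continuous_const.mul continuous_id)).continuousOn).mul hyc
  have ht_nonneg : ∀ k, 0 ≤ t k := fun k => ht0 ▸ htmono.monotone (Nat.zero_le k)
  have hzder : ∀ k : ℕ, ∀ s ∈ Ioo (t k) (t (k+1)),
      ∃ d, HasDerivAt z d s ∧ 0 ≤ d := by
    intro k s hs
    obtain ⟨d, hd, hdge⟩ := hder k s hs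
    have he : HasDerivAt (fun s : ℝ => Real.exp (lam * s)) (Real.exp (lam * s) * lam) s := by
      simpa using ((hasDerivAt_id s).const_mul lam).exp
    refine ⟨_, he.mul hd, ?_⟩
    have hep := Real.exp_pos (lam * s)
    nlinarith [mul_le_mul_of_nonneg_left hdge hep.le]
  have hmono : ∀ k : ℕ, MonotoneOn z (Icc (t k) (t (k+1))) := by
    intro k
    have hsub : Icc (t k) (t (k+1)) ⊆ Ici (0:ℝ) := fun s hs => le_trans (ht_nonneg k) hs.1
    apply monotoneOn_of_deriv_nonneg (convex_Icc _ _) (hzc.mono hsub)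
    · rw [interior_Icc]
      intro s hs
      obtain ⟨d, hd, _⟩ := hzder k s hs
      exact hd.differentiableAt.differentiableWithinAt
    · rw [interior_Icc]
      intro s hs
      obtain ⟨d, hd, hd0⟩ := hzder k s hs
      rw [hd.deriv]; exact hd0
  have hkz : ∀ k, 0 ≤ z (t k) := by
    intro k
    induction k with
    | zero =>
      rw [ht0]
      simpa [z] using mul_nonneg (Real.exp_pos (lam * 0)).le hy0
    | succ k ih =>
      have hle := (htmono (lt_add_one k)).le
      exact le_trans ih (hmono k ⟨le_refl _, hle⟩ ⟨hle, le_refl _⟩ hle)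
  intro s hs
  have hex : ∃ k, s < t k := (httop.eventually (eventually_gt_atTop s)).exists
  have hk0 : s < t (Nat.find hex) := Nat.find_spec hex
  have hk0ne : Nat.find hex ≠ 0 := by
    intro h0
    rw [h0, ht0] at hk0
    exact absurd hs (not_le.2 hk0)
  obtain ⟨k, hkeq⟩ : ∃ k, Nat.find hex = k + 1 := ⟨Nat.find hex - 1, by omega⟩
  have hks : t k ≤ s := not_lt.1 (Nat.find_min hex (by omega))
  rw [hkeq] at hk0
  have hzs : 0 ≤ z s :=
    le_trans (hkz k) (hmono k ⟨le_refl _, (htmono (lt_add_one k)).le⟩ ⟨hks, hk0.le⟩ hks)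
  have hzs' : 0 ≤ Real.exp (lam * s) * y s := hzs
  have hep := Real.exp_pos (lam * s)
  nlinarith [hzs', hep]

section
variable {n : ℕ} {r : ℕ} {f : E n → E n} {h : E n → ℝ}

lemma lieIter_contDiff (hf : ContDiff ℝ (r - 1 : ℕ) f) (hh : ContDiff ℝ (r : ℕ) h) :
    ∀ j, j ≤ r → ContDiff ℝ ((r - j : ℕ) : ℕ∞) (lieIter f h j) := by
  intro j
  induction j with
  | zero => intro _; simpa [lieIter] using hh
  | succ j ih =>
    intro hj
    have h1 : ContDiff ℝ ((r - j : ℕ) : ℕ∞) (lieIter f h j) := ih (by omega)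
    have h2 : ContDiff ℝ ((r - (j+1) : ℕ) : ℕ∞) (fderiv ℝ (lieIter f h j)) := by
      apply h1.fderiv_right
      have he : (r - (j+1)) + 1 = r - j := by omega
      rw [← he]
      exact_mod_cast le_refl _
    have h3 : ContDiff ℝ ((r - (j+1) : ℕ) : ℕ∞) f :=
      hf.of_le (Nat.cast_le.mpr (by omega : r - (j+1) ≤ r - 1))
    show ContDiff ℝ _ (fun p => fderiv ℝ (lieIter f h j) p (f p))
    exact h2.clm_apply h3

lemma lieIter_diff (hf : ContDiff ℝ (r - 1 : ℕ) f) (hh : ContDiff ℝ (r : ℕ) h)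
    {j : ℕ} (hj : j + 1 ≤ r) : Differentiable ℝ (lieIter f h j) :=
  (lieIter_contDiff hf hh j (by omega)).differentiable
    (by exact_mod_cast (by omega : r - j ≠ 0))

lemma key_sum (lam : ℕ → ℝ) (L : ℕ → ℝ) (k : ℕ) :
    ∑ j ∈ Finset.range (k+2), esym lam (k+1) (k+1-j) * L j
    = ∑ j ∈ Finset.range (k+1), esym lam k (k-j) * L (j+1)
      + lam (k+1) * ∑ j ∈ Finset.range (k+1), esym lam k (k-j) * L j := by
  rw [Finset.sum_range_succ]
  have h1 : ∀ j ∈ Finset.range (k+1),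
      esym lam (k+1) (k+1-j) * L j
      = esym lam k (k+1-j) * L j + lam (k+1) * (esym lam k (k-j) * L j) := by
    intro j hj
    have hjk : j ≤ k := by simpa [Nat.lt_succ_iff] using hj
    have he : k+1-j = (k-j)+1 := by omega
    rw [he, esym_succ']
    ring
  rw [Finset.sum_congr rfl h1, Finset.sum_add_distrib, ← Finset.mul_sum]
  have h2 : ∑ j ∈ Finset.range (k+1), esym lam k (k+1-j) * L j
      = ∑ j ∈ Finset.range k, esym lam k (k-j) * L (j+1) := by
    rw [Finset.sum_range_succ']
    have h3 : ∀ j ∈ Finset.range k, esym lam k (k+1-(j+1)) * L (j+1)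
        = esym lam k (k-j) * L (j+1) := by
      intro j hj; congr 2; omega
    rw [Finset.sum_congr rfl h3, esym_of_lt' lam (by omega : k < k+1-0)]
    ring
  rw [h2]
  have h4 : ∑ j ∈ Finset.range (k+1), esym lam k (k-j) * L (j+1)
      = ∑ j ∈ Finset.range k, esym lam k (k-j) * L (j+1) + L (k+1) := by
    rw [Finset.sum_range_succ, Nat.sub_self, esym_zero']
    ring
  rw [h4, Nat.sub_self, esym_zero']
  ring

lemma cascade_expand (lam : ℕ → ℝ)
    (hf : ContDiff ℝ (r - 1 : ℕ) f) (hh : ContDiff ℝ (r : ℕ) h) :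
    ∀ k, k ≤ r → ∀ p, cascade f h lam k p
      = ∑ j ∈ Finset.range (k+1), esym lam k (k-j) * lieIter f h j p := by
  intro k
  induction k with
  | zero => intro _ p; simp [cascade, lieIter, esym_zero']
  | succ k ih =>
    intro hk p
    have hkr : k ≤ r := by omega
    have heq : cascade f h lam k
        = fun q => ∑ j ∈ Finset.range (k+1), esym lam k (k-j) * lieIter f h j q :=
      funext (ih hkr)
    have hF : HasFDerivAt (cascade f h lam k)
        (∑ j ∈ Finset.range (k+1), esym lam k (k-j) • fderiv ℝ (lieIter f h j) p) p := by
      rw [heq]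
      apply HasFDerivAt.fun_sum
      intro j hj
      have hjr : j + 1 ≤ r := by
        have : j < k + 1 := Finset.mem_range.1 hj
        omega
      exact ((lieIter_diff hf hh hjr p).hasFDerivAt).const_mul _
    have hfd : fderiv ℝ (cascade f h lam k) p
        = ∑ j ∈ Finset.range (k+1), esym lam k (k-j) • fderiv ℝ (lieIter f h j) p :=
      hF.fderiv
    show fderiv ℝ (cascade f h lam k) p (f p) + lam (k + 1) * cascade f h lam k p = _
    rw [hfd, ih hkr p, key_sum lam (fun j => lieIter f h j p) k]
    congr 1
    rw [ContinuousLinearMap.sum_apply]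
    refine Finset.sum_congr rfl fun j hj => ?_
    rw [ContinuousLinearMap.smul_apply]
    rfl

lemma cascade_hasFDerivAt (lam : ℕ → ℝ)
    (hf : ContDiff ℝ (r - 1 : ℕ) f) (hh : ContDiff ℝ (r : ℕ) h)
    {k : ℕ} (hk : k + 1 ≤ r) (p : E n) :
    HasFDerivAt (cascade f h lam k)
      (∑ j ∈ Finset.range (k+1), esym lam k (k-j) • fderiv ℝ (lieIter f h j) p) p := by
  rw [funext (cascade_expand lam hf hh k (by omega))]
  apply HasFDerivAt.fun_sum
  intro j hj
  have hjr : j + 1 ≤ r := by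
    have : j < k + 1 := Finset.mem_range.1 hj
    omega
  exact ((lieIter_diff hf hh hjr p).hasFDerivAt).const_mul _

end

/-- Continuous-time invariance for higher relative degree: if `s_k(x(0)) ≥ 0` for
`k = 0, …, r-1` and `ξ(x(t), u_k) ≥ 0` for all `k` and all `t ∈ (t_k, t_{k+1})` along the
closed-loop sampled-data trajectory, then `h(x(t)) ≥ 0` for all `t ≥ 0`. -/
theorem stmt_7 {n m : ℕ} (r : ℕ) (hr : 2 ≤ r)
    (f : E n → E n) (hfl : LocallyLipschitz f) (hf : ContDiff ℝ (r - 1 : ℕ) f)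
    (g : E n → E m →L[ℝ] E n) (hgl : LocallyLipschitz g)
    (U : Set (E m))
    (h : E n → ℝ) (hh : ContDiff ℝ (r : ℕ) h)
    (lam : ℕ → ℝ) (hlam : ∀ i, 1 ≤ i → i ≤ r → 0 < lam i)
    (hreldeg : ∀ k, k + 2 ≤ r → ∀ p : E n, ∀ v : E m,
      fderiv ℝ (lieIter f h k) p (g p v) = 0)
    (t : ℕ → ℝ) (ht0 : t 0 = 0) (htmono : StrictMono t)
    (httop : Tendsto t atTop atTop)
    (u : ℕ → E m) (hu : ∀ k, u k ∈ U)
    (x : ℝ → E n) (hxc : ContinuousOn x (Ici (0 : ℝ)))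
    (hode : ∀ k, ∀ s ∈ Ioo (t k) (t (k + 1)),
      HasDerivAt x (f (x s) + g (x s) (u k)) s)
    (hinit : ∀ k < r, 0 ≤ cascade f h lam k (x 0))
    (hsafe : ∀ k, ∀ s ∈ Ioo (t k) (t (k + 1)), 0 ≤ xiR f g h lam r (x s) (u k)) :
    ∀ s, 0 ≤ s → 0 ≤ h (x s) := by
  have hr1 : 1 ≤ r := by omega
  set D : ℕ → E n → (E n →L[ℝ] ℝ) := fun k p =>
    ∑ j ∈ Finset.range (k+1), esym lam k (k-j) • fderiv ℝ (lieIter f h j) p with hD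
  have hasF : ∀ k, k + 1 ≤ r → ∀ p, HasFDerivAt (cascade f h lam k) (D k p) p :=
    fun k hk p => cascade_hasFDerivAt lam hf hh hk p
  have Df : ∀ k, k + 1 ≤ r → ∀ p, D k p (f p)
      = cascade f h lam (k+1) p - lam (k+1) * cascade f h lam k p := by
    intro k hk p
    have hc : cascade f h lam (k+1) p
        = fderiv ℝ (cascade f h lam k) p (f p) + lam (k+1) * cascade f h lam k p := rfl
    rw [hc, (hasF k hk p).fderiv]
    ring
  have Dg0 : ∀ k, k + 2 ≤ r → ∀ p v, D k p (g p v) = 0 := by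
    intro k hk p v
    simp only [hD, ContinuousLinearMap.sum_apply, ContinuousLinearMap.smul_apply]
    refine Finset.sum_eq_zero fun j hj => ?_
    rw [hreldeg j (by have := Finset.mem_range.1 hj; omega) p v]
    simp
  have Dgtop : ∀ p v, D (r-1) p (g p v) = fderiv ℝ (lieIter f h (r-1)) p (g p v) := by
    intro p v
    simp only [hD, ContinuousLinearMap.sum_apply, ContinuousLinearMap.smul_apply]
    have hzero : ∀ j ∈ Finset.range (r-1),
        esym lam (r-1) (r-1-j) • fderiv ℝ (lieIter f h j) p (g p v) = 0 := by
      intro j hj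
      rw [hreldeg j (by have := Finset.mem_range.1 hj; omega) p v, smul_zero]
    rw [Finset.sum_range_succ, Finset.sum_eq_zero hzero, Nat.sub_self, esym_zero',
      one_smul, zero_add]
  have xiR_eq : ∀ p v, xiR f g h lam r p v
      = cascade f h lam r p + fderiv ℝ (lieIter f h (r-1)) p (g p v) := by
    intro p v
    rw [cascade_expand lam hf hh r le_rfl p, Finset.sum_range_succ, Nat.sub_self, esym_zero']
    unfold xiR
    ring
  have ycont : ∀ k, k + 1 ≤ r → ContinuousOn (fun s => cascade f h lam k (x s)) (Ici 0) := by
    intro k hk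
    have hdiff : Differentiable ℝ (cascade f h lam k) := fun p => (hasF k hk p).differentiableAt
    have hcont : Continuous (cascade f h lam k) := hdiff.continuous
    exact hcont.comp_continuousOn hxc
  have step : ∀ k, k + 1 ≤ r →
      (∀ k' : ℕ, ∀ s ∈ Ioo (t k') (t (k'+1)),
        -(lam (k+1) * cascade f h lam k (x s)) ≤ D k (x s) (f (x s) + g (x s) (u k'))) →
      ∀ s, 0 ≤ s → 0 ≤ cascade f h lam k (x s) := by
    intro k hk hbound
    apply ode_nonneg' t ht0 htmono httop (lam (k+1)) _ (ycont k hk) (hinit k (by omega))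
    intro k' s hs
    have hd := (hasF k hk (x s)).comp_hasDerivAt s (hode k' s hs)
    exact ⟨_, hd, hbound k' s hs⟩
  have ht_nonneg : ∀ k, 0 ≤ t k := fun k => ht0 ▸ htmono.monotone (Nat.zero_le k)
  have top : ∀ s, 0 ≤ s → 0 ≤ cascade f h lam (r-1) (x s) := by
    apply step (r-1) (by omega)
    intro k' s hs
    rw [map_add, Df (r-1) (by omega) (x s), Dgtop (x s) (u k')]
    have hx1 : r - 1 + 1 = r := by omega
    rw [hx1]
    have hsf := hsafe k' s hs
    rw [xiR_eq (x s) (u k')] at hsf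
    linarith
  have down : ∀ j, ∀ s, 0 ≤ s → 0 ≤ cascade f h lam (r - 1 - j) (x s) := by
    intro j
    induction j with
    | zero => simpa using top
    | succ j ih =>
      by_cases hcase : j + 1 ≤ r - 1
      · have hk2 : (r - 1 - (j+1)) + 2 ≤ r := by omega
        have hk1 : (r - 1 - (j+1)) + 1 = r - 1 - j := by omega
        apply step (r-1-(j+1)) (by omega)
        intro k' s hs
        rw [map_add, Df _ (by omega) (x s), Dg0 _ hk2 (x s) (u k'), add_zero, hk1]
        have hs0 : (0:ℝ) ≤ s := le_trans (ht_nonneg k') hs.1.le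
        have h1 := ih s hs0
        linarith
      · have heq : r - 1 - (j+1) = r - 1 - j := by omega
        rw [heq]; exact ih
  intro s hs
  have hfin := down (r-1) s hs
  rw [Nat.sub_self] at hfin
  simpa [cascade] using hfin
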